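/- If A and B are operators (or matrices) such that [A,B] commutes with both A and B, then exp(A) exp(B) = exp((1/2)[A,B]) exp(A + B), and consequently exp(A) exp(B) = exp([A,B]) exp(B) exp(A). -/

import Mathlib

open Matrix

attribute [local instance] Matrix.linftyOpNormedAddCommGroup Matrix.linftyOpNormedRing
  Matrix.linftyOpNormedSpace Matrix.linftyOpNormedAlgebra

section Aux
open NormedSpace
variable {𝔸 : Type*} [NormedRing 𝔸] [NormedAlgebra ℂ 𝔸] [CompleteSpace 𝔸]

private lemma exp_conj_aux (a b c : 𝔸) (hc : a * b - b * a = c) (hca : Commute c a) (t : ℂ) :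
    exp (t • a) * b = (b + t • c) * exp (t • a) := by
  have hderiv : ∀ s : ℂ,
      HasDerivAt (fun s : ℂ => exp (s • (-a)) * ((b + s • c) * exp (s • a))) 0 s := by
    intro s
    have h1 := hasDerivAt_exp_smul_const' (𝕂 := ℂ) (-a) s
    have h3 := hasDerivAt_exp_smul_const (𝕂 := ℂ) a s
    have h2 : HasDerivAt (fun s : ℂ => b + s • c) c s := by
      simpa using ((hasDerivAt_id s).smul_const c).const_add b
    have htot := h1.mul (h2.mul h3)
    convert htot using 1
    · rfl
    set em := exp (s • (-a)) with hem
    set e := exp (s • a) with he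
    have hea : e * a = a * e := (((Commute.refl a).smul_right s).exp_right).eq.symm
    have hma : -a * em = em * -a := (((Commute.refl (-a)).smul_right s).exp_right).eq
    set d := s • c with hd
    have hdaa : d * a = a * d := (hca.smul_left s).eq
    have hX : -a * (b + d) + (c + (b + d) * a) = 0 := by
      simp only [neg_mul, mul_add, add_mul]
      rw [hdaa, ← hc]
      abel
    rw [hea, hma]
    calc (0 : 𝔸) = em * ((-a * (b + d) + (c + (b + d) * a)) * e) := by rw [hX]; simp
      _ = em * -a * ((b + d) * e) + em * (c * e + (b + d) * (a * e)) := by noncomm_ring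
  have hval := is_const_of_deriv_eq_zero (𝕜 := ℂ)
      (fun s => (hderiv s).differentiableAt) (fun s => (hderiv s).deriv) t 0
  simp only [zero_smul, exp_zero, one_mul, mul_one, add_zero] at hval
  have hinv : exp (t • a) * exp (t • (-a)) = 1 := by
    rw [← NormedSpace.exp_add_of_commute_of_mem_ball (𝕂 := ℂ) (((Commute.refl a).neg_right.smul_left t).smul_right t)
      ((expSeries_radius_eq_top ℂ 𝔸).symm ▸ edist_lt_top _ _) ((expSeries_radius_eq_top ℂ 𝔸).symm ▸ edist_lt_top _ _)]
    rw [show t • a + t • (-a) = 0 by module, exp_zero]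
  calc exp (t • a) * b = exp (t • a) * (exp (t • (-a)) * ((b + t • c) * exp (t • a))) := by
        rw [hval]
    _ = (exp (t • a) * exp (t • (-a))) * ((b + t • c) * exp (t • a)) := by rw [mul_assoc]
    _ = (b + t • c) * exp (t • a) := by rw [hinv, one_mul]

private lemma exp_bch_aux (a b c : 𝔸) (hc : a * b - b * a = c)
    (hca : Commute c a) (hcb : Commute c b) :
    exp a * exp b = exp ((1 / 2 : ℂ) • c) * exp (a + b) := by
  have hcab : Commute c (a + b) := hca.add_right hcb
  have hderiv : ∀ s : ℂ, HasDerivAt (fun s : ℂ =>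
      exp ((-(s ^ 2) / 2) • c) * (exp (s • (-(a + b))) * (exp (s • a) * exp (s • b)))) 0 s := by
    intro s
    have hs : HasDerivAt (fun t : ℂ => -(t ^ 2) / 2) (-s) s := by
      have := ((hasDerivAt_pow 2 s).neg).div_const 2
      refine this.congr_deriv ?_
      push_cast; ring
    have hq : HasDerivAt (fun t : ℂ => exp ((-(t ^ 2) / 2) • c))
        ((-s) • (c * exp ((-(s ^ 2) / 2) • c))) s := by
      have := (hasDerivAt_exp_smul_const' (𝕂 := ℂ) c (-(s ^ 2) / 2)).scomp s hs; exact this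
    have hm := hasDerivAt_exp_smul_const' (𝕂 := ℂ) (-(a + b)) s
    have hA := hasDerivAt_exp_smul_const (𝕂 := ℂ) a s
    have hB := hasDerivAt_exp_smul_const' (𝕂 := ℂ) b s
    have htot := hq.mul (hm.mul (hA.mul hB))
    convert htot using 1
    · rfl
    simp only [Pi.mul_apply]
    have hconj := exp_conj_aux a b c hc hca s
    set q := exp ((-(s ^ 2) / 2) • c) with hqdef
    set m := exp (s • (-(a + b))) with hmdef
    set ea := exp (s • a) with headef
    set eb := exp (s • b) with hebdef
    set d := s • c with hddef
    have heaa : ea * a = a * ea := (((Commute.refl a).smul_right s).exp_right).eq.symm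
    have hm1 : m * (a + (b + d)) = (a + (b + d)) * m := by
      rw [show a + (b + d) = (a + b) + d from (add_assoc a b d).symm]
      exact ((((Commute.refl (a + b)).add_left
        ((hcab.smul_left s).symm.symm)).neg_right.smul_right s).exp_right).eq.symm
    have hq1 : q * c = c * q := (((Commute.refl c).smul_left _).exp_left).eq
    have key : (-(a + b)) * m * (ea * eb) + m * ((a * ea) * eb + ((b + d) * ea) * eb)
        = d * (m * (ea * eb)) := by
      calc (-(a + b)) * m * (ea * eb) + m * ((a * ea) * eb + ((b + d) * ea) * eb)
          = (-(a + b)) * (m * (ea * eb)) + (m * (a + (b + d))) * (ea * eb) := by noncomm_ring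
        _ = (-(a + b)) * (m * (ea * eb)) + ((a + (b + d)) * m) * (ea * eb) := by rw [hm1]
        _ = d * (m * (ea * eb)) := by noncomm_ring
    have h2 : (-s) • (c * q) * (m * (ea * eb)) + q * (d * (m * (ea * eb))) = 0 := by
      rw [hddef]
      simp only [neg_smul, neg_mul, smul_mul_assoc, mul_smul_comm, mul_assoc]
      rw [show q * (c * (m * (ea * eb))) = c * (q * (m * (ea * eb))) by
        rw [← mul_assoc, hq1, mul_assoc]]
      exact neg_add_cancel _
    rw [heaa, ← mul_assoc ea b, hconj, key]
    exact h2.symm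
  have hval := is_const_of_deriv_eq_zero (𝕜 := ℂ)
      (fun s => (hderiv s).differentiableAt) (fun s => (hderiv s).deriv) 1 0
  simp only [one_pow, one_smul, zero_smul, exp_zero, one_mul, mul_one] at hval
  norm_num at hval
  rw [show (-b + -a : 𝔸) = -(a + b) by abel,
    show -((1 / 2 : ℂ) • c) = (-(1 / 2) : ℂ) • c by module] at hval
  -- hval : exp ((-(1/2) : ℂ) • c) * (exp (-(a+b)) * (exp a * exp b)) = 1
  have h1 : exp ((1 / 2 : ℂ) • c) * exp ((-(1 / 2) : ℂ) • c) = 1 := by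
    rw [← NormedSpace.exp_add_of_commute_of_mem_ball (𝕂 := ℂ) (((Commute.refl c).smul_left _).smul_right _)
      ((expSeries_radius_eq_top ℂ 𝔸).symm ▸ edist_lt_top _ _) ((expSeries_radius_eq_top ℂ 𝔸).symm ▸ edist_lt_top _ _),
      show (1 / 2 : ℂ) • c + (-(1 / 2) : ℂ) • c = 0 by module, exp_zero]
  have h2 : exp (a + b) * exp (-(a + b)) = 1 := by
    rw [← NormedSpace.exp_add_of_commute_of_mem_ball (𝕂 := ℂ) (Commute.refl (a + b)).neg_right
      ((expSeries_radius_eq_top ℂ 𝔸).symm ▸ edist_lt_top _ _) ((expSeries_radius_eq_top ℂ 𝔸).symm ▸ edist_lt_top _ _),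
      show (a + b) + -(a + b) = 0 by abel, exp_zero]
  have h3 : exp (-(a + b)) * (exp a * exp b) = exp ((1 / 2 : ℂ) • c) := by
    calc exp (-(a + b)) * (exp a * exp b)
        = (exp ((1 / 2 : ℂ) • c) * exp ((-(1 / 2) : ℂ) • c)) *
          (exp (-(a + b)) * (exp a * exp b)) := by rw [h1, one_mul]
      _ = exp ((1 / 2 : ℂ) • c) *
          (exp ((-(1 / 2) : ℂ) • c) * (exp (-(a + b)) * (exp a * exp b))) := by
          rw [mul_assoc]
      _ = exp ((1 / 2 : ℂ) • c) := by rw [hval, mul_one]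
  calc exp a * exp b
      = (exp (a + b) * exp (-(a + b))) * (exp a * exp b) := by rw [h2, one_mul]
    _ = exp (a + b) * (exp (-(a + b)) * (exp a * exp b)) := by rw [mul_assoc]
    _ = exp (a + b) * exp ((1 / 2 : ℂ) • c) := by rw [h3]
    _ = exp ((1 / 2 : ℂ) • c) * exp (a + b) := ((hcab.symm.smul_right _).exp).eq

end Aux

/-- If `[A,B]` commutes with both `A` and `B`, then
`exp(A) exp(B) = exp((1/2)[A,B]) exp(A + B)`, and consequently
`exp(A) exp(B) = exp([A,B]) exp(B) exp(A)`. -/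
theorem exp_mul_exp_of_commutator_central
    (n : ℕ) (A B : Matrix (Fin n) (Fin n) ℂ)
    (hA : Commute (A * B - B * A) A) (hB : Commute (A * B - B * A) B) :
    NormedSpace.exp A * NormedSpace.exp B
        = NormedSpace.exp ((1 / 2 : ℂ) • (A * B - B * A))
          * NormedSpace.exp (A + B)
    ∧ NormedSpace.exp A * NormedSpace.exp B
        = NormedSpace.exp (A * B - B * A)
          * (NormedSpace.exp B * NormedSpace.exp A) := by
  have part1 : NormedSpace.exp A * NormedSpace.exp B
      = NormedSpace.exp ((1 / 2 : ℂ) • (A * B - B * A)) * NormedSpace.exp (A + B) :=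
    exp_bch_aux A B (A * B - B * A) rfl hA hB
  refine ⟨part1, ?_⟩
  have hswap : NormedSpace.exp B * NormedSpace.exp A
      = NormedSpace.exp ((1 / 2 : ℂ) • (-(A * B - B * A))) * NormedSpace.exp (B + A) := by
    refine exp_bch_aux B A (-(A * B - B * A)) (by abel) hB.neg_left hA.neg_left
  have hcc : NormedSpace.exp (A * B - B * A)
        * NormedSpace.exp ((1 / 2 : ℂ) • (-(A * B - B * A)))
      = NormedSpace.exp ((1 / 2 : ℂ) • (A * B - B * A)) := by
    rw [← Matrix.exp_add_of_commute _ _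
        (((Commute.refl (A * B - B * A)).neg_right).smul_right (1 / 2 : ℂ)),
      show (A * B - B * A) + (1 / 2 : ℂ) • (-(A * B - B * A))
          = (1 / 2 : ℂ) • (A * B - B * A) by module]
  rw [hswap, ← mul_assoc, hcc, add_comm B A, part1]
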